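/- In k[b, x_1, x_2, x_3, x_4], the ideal J_1 = (x_1x_2, x_2^4 - x_1^4, x_ix_j for 1 ≤ i < j ≤ 4 with 3 ≤ j, x_3^2 - x_1^4, x_4^2 - b·x_4 - x_1^4) equals the intersection (x_1, x_2, x_3, x_4 - b) ∩ (x_1x_2, x_2^4 - x_1^4, x_ix_j, x_3^2 - x_1^4, x_4^2, b·x_4 + x_1^4). -/
import Mathlib


set_option synthInstance.maxHeartbeats 1000000
set_option maxHeartbeats 1000000

open MvPolynomial

/-- In `k[b, x₁, x₂, x₃, x₄]` (here `b = X 0`, `xᵢ = X i`), the ideal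
`J₁ = (x₁x₂, x₂⁴ - x₁⁴, xᵢxⱼ (i<j, j∈{3,4}), x₃² - x₁⁴, x₄² - b·x₄ - x₁⁴)` equals
`(x₁, x₂, x₃, x₄ - b) ∩ (x₁x₂, x₂⁴ - x₁⁴, xᵢxⱼ, x₃² - x₁⁴, x₄², b·x₄ + x₁⁴)`. -/
theorem stmt_16 (k : Type*) [Field k] [IsAlgClosed k] [CharZero k] :
    (Ideal.span {X 1 * X 2, X 2 ^ 4 - X 1 ^ 4,
        X 1 * X 3, X 2 * X 3, X 1 * X 4, X 2 * X 4, X 3 * X 4,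
        X 3 ^ 2 - X 1 ^ 4, X 4 ^ 2 - X 0 * X 4 - X 1 ^ 4} :
      Ideal (MvPolynomial (Fin 5) k)) =
    (Ideal.span {X 1, X 2, X 3, X 4 - X 0} :
        Ideal (MvPolynomial (Fin 5) k)) ⊓
      Ideal.span {X 1 * X 2, X 2 ^ 4 - X 1 ^ 4,
        X 1 * X 3, X 2 * X 3, X 1 * X 4, X 2 * X 4, X 3 * X 4,
        X 3 ^ 2 - X 1 ^ 4, X 4 ^ 2, X 0 * X 4 + X 1 ^ 4} := by
  classical
  set q : MvPolynomial (Fin 5) k := X 0 * X 4 + X 1 ^ 4 with hq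
  set J : Ideal (MvPolynomial (Fin 5) k) := Ideal.span {X 1 * X 2, X 2 ^ 4 - X 1 ^ 4,
      X 1 * X 3, X 2 * X 3, X 1 * X 4, X 2 * X 4, X 3 * X 4,
      X 3 ^ 2 - X 1 ^ 4, X 4 ^ 2 - X 0 * X 4 - X 1 ^ 4} with hJdef
  set P : Ideal (MvPolynomial (Fin 5) k) := Ideal.span {X 1, X 2, X 3, X 4 - X 0} with hPdef
  set Q : Ideal (MvPolynomial (Fin 5) k) := Ideal.span {X 1 * X 2, X 2 ^ 4 - X 1 ^ 4,
      X 1 * X 3, X 2 * X 3, X 1 * X 4, X 2 * X 4, X 3 * X 4,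
      X 3 ^ 2 - X 1 ^ 4, X 4 ^ 2, q} with hQdef
  -- generators
  have p1 : (X 1 : MvPolynomial (Fin 5) k) ∈ P := Ideal.subset_span (by simp)
  have p2 : (X 2 : MvPolynomial (Fin 5) k) ∈ P := Ideal.subset_span (by simp)
  have p3 : (X 3 : MvPolynomial (Fin 5) k) ∈ P := Ideal.subset_span (by simp)
  have p4 : (X 4 - X 0 : MvPolynomial (Fin 5) k) ∈ P := Ideal.subset_span (by simp)
  have j1 : (X 1 * X 2 : MvPolynomial (Fin 5) k) ∈ J := Ideal.subset_span (by simp)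
  have j2 : (X 2 ^ 4 - X 1 ^ 4 : MvPolynomial (Fin 5) k) ∈ J := Ideal.subset_span (by simp)
  have j3 : (X 1 * X 3 : MvPolynomial (Fin 5) k) ∈ J := Ideal.subset_span (by simp)
  have j4 : (X 2 * X 3 : MvPolynomial (Fin 5) k) ∈ J := Ideal.subset_span (by simp)
  have j5 : (X 1 * X 4 : MvPolynomial (Fin 5) k) ∈ J := Ideal.subset_span (by simp)
  have j6 : (X 2 * X 4 : MvPolynomial (Fin 5) k) ∈ J := Ideal.subset_span (by simp)
  have j7 : (X 3 * X 4 : MvPolynomial (Fin 5) k) ∈ J := Ideal.subset_span (by simp)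
  have j8 : (X 3 ^ 2 - X 1 ^ 4 : MvPolynomial (Fin 5) k) ∈ J := Ideal.subset_span (by simp)
  have j9 : (X 4 ^ 2 - X 0 * X 4 - X 1 ^ 4 : MvPolynomial (Fin 5) k) ∈ J :=
    Ideal.subset_span (by simp)
  have qq : q ∈ Q := Ideal.subset_span (by simp)
  have q9 : (X 4 ^ 2 : MvPolynomial (Fin 5) k) ∈ Q := Ideal.subset_span (by simp)
  -- J ≤ P
  have hJP : J ≤ P := by
    rw [hJdef, Ideal.span_le]
    rintro f hf
    simp only [Set.mem_insert_iff, Set.mem_singleton_iff] at hf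
    rcases hf with rfl | rfl | rfl | rfl | rfl | rfl | rfl | rfl | rfl
    · exact Ideal.mul_mem_right _ _ p1
    · have e : (X 2 ^ 4 - X 1 ^ 4 : MvPolynomial (Fin 5) k)
          = X 2 ^ 3 * X 2 - X 1 ^ 3 * X 1 := by ring
      rw [e]; exact sub_mem (Ideal.mul_mem_left _ _ p2) (Ideal.mul_mem_left _ _ p1)
    · exact Ideal.mul_mem_right _ _ p1
    · exact Ideal.mul_mem_right _ _ p2
    · exact Ideal.mul_mem_right _ _ p1
    · exact Ideal.mul_mem_right _ _ p2
    · exact Ideal.mul_mem_right _ _ p3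
    · have e : (X 3 ^ 2 - X 1 ^ 4 : MvPolynomial (Fin 5) k)
          = X 3 * X 3 - X 1 ^ 3 * X 1 := by ring
      rw [e]; exact sub_mem (Ideal.mul_mem_left _ _ p3) (Ideal.mul_mem_left _ _ p1)
    · have e : (X 4 ^ 2 - X 0 * X 4 - X 1 ^ 4 : MvPolynomial (Fin 5) k)
          = X 4 * (X 4 - X 0) - X 1 ^ 3 * X 1 := by ring
      rw [e]; exact sub_mem (Ideal.mul_mem_left _ _ p4) (Ideal.mul_mem_left _ _ p1)
  -- J ≤ Q
  have hJQ : J ≤ Q := by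
    rw [hJdef, Ideal.span_le]
    rintro f hf
    simp only [Set.mem_insert_iff, Set.mem_singleton_iff] at hf
    rcases hf with rfl | rfl | rfl | rfl | rfl | rfl | rfl | rfl | rfl
    · exact Ideal.subset_span (by simp)
    · exact Ideal.subset_span (by simp)
    · exact Ideal.subset_span (by simp)
    · exact Ideal.subset_span (by simp)
    · exact Ideal.subset_span (by simp)
    · exact Ideal.subset_span (by simp)
    · exact Ideal.subset_span (by simp)
    · exact Ideal.subset_span (by simp)
    · have e : (X 4 ^ 2 - X 0 * X 4 - X 1 ^ 4 : MvPolynomial (Fin 5) k)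
          = X 4 ^ 2 - q := by rw [hq]; ring
      rw [e]; exact sub_mem q9 qq
  -- Q = J ⊔ (q)
  have hQeq : Q = J ⊔ Ideal.span {q} := by
    apply le_antisymm
    · rw [hQdef, Ideal.span_le]
      rintro f hf
      simp only [Set.mem_insert_iff, Set.mem_singleton_iff] at hf
      rcases hf with rfl | rfl | rfl | rfl | rfl | rfl | rfl | rfl | rfl | rfl
      · exact Ideal.mem_sup_left j1
      · exact Ideal.mem_sup_left j2
      · exact Ideal.mem_sup_left j3
      · exact Ideal.mem_sup_left j4
      · exact Ideal.mem_sup_left j5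
      · exact Ideal.mem_sup_left j6
      · exact Ideal.mem_sup_left j7
      · exact Ideal.mem_sup_left j8
      · have e : (X 4 ^ 2 : MvPolynomial (Fin 5) k)
            = (X 4 ^ 2 - X 0 * X 4 - X 1 ^ 4) + q := by rw [hq]; ring
        rw [e]
        exact add_mem (Ideal.mem_sup_left j9)
          (Ideal.mem_sup_right (Ideal.subset_span rfl))
      · exact Ideal.mem_sup_right (Ideal.subset_span rfl)
    · exact sup_le hJQ (Ideal.span_le.2 (by simpa using qq))
  -- the evaluation map
  set σ : Fin 5 → MvPolynomial (Fin 5) k := ![X 0, 0, 0, 0, X 0] with hσdef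
  have hσ : ∀ n : Fin 5, X n - σ n ∈ P := by
    intro n
    fin_cases n
    · simpa [hσdef] using P.zero_mem
    · simpa [hσdef] using p1
    · simpa [hσdef] using p2
    · simpa [hσdef] using p3
    · simpa [hσdef] using p4
  have hker1 : ∀ f : MvPolynomial (Fin 5) k, f - aeval σ f ∈ P := by
    intro f
    induction f using MvPolynomial.induction_on with
    | C a => simp only [aeval_C, algebraMap_eq, sub_self]; exact P.zero_mem
    | add p r hp hr =>
        have e : p + r - aeval σ (p + r) = (p - aeval σ p) + (r - aeval σ r) := by
          rw [map_add]; ring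
        rw [e]; exact add_mem hp hr
    | mul_X p n hp =>
        have e : p * X n - aeval σ (p * X n)
            = (p - aeval σ p) * X n + aeval σ p * (X n - σ n) := by
          rw [map_mul, aeval_X]; ring
        rw [e]
        exact add_mem (Ideal.mul_mem_right _ _ hp) (Ideal.mul_mem_left _ _ (hσ n))
  have hPker : ∀ f ∈ P, aeval σ f = 0 := by
    intro f hf
    have : P ≤ RingHom.ker (aeval σ : MvPolynomial (Fin 5) k →ₐ[k] _).toRingHom := by
      rw [hPdef, Ideal.span_le]
      rintro g hg
      simp only [Set.mem_insert_iff, Set.mem_singleton_iff] at hg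
      rcases hg with rfl | rfl | rfl | rfl <;>
        simp [RingHom.mem_ker, hσdef]
    exact this hf
  -- q·P ⊆ J
  have key : ∀ h ∈ P, h * q ∈ J := by
    intro h hh
    refine Submodule.span_induction (p := fun x _ => x * q ∈ J) ?_ ?_ ?_ ?_ hh
    · rintro x hx
      simp only [Set.mem_insert_iff, Set.mem_singleton_iff] at hx
      rcases hx with rfl | rfl | rfl | rfl
      · have e : X 1 * q
            = X 0 * (X 1 * X 4) + (X 3 * (X 1 * X 3) - X 1 * (X 3 ^ 2 - X 1 ^ 4)) := by
          rw [hq]; ring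
        rw [e]
        exact add_mem (Ideal.mul_mem_left _ _ j5)
          (sub_mem (Ideal.mul_mem_left _ _ j3) (Ideal.mul_mem_left _ _ j8))
      · have e : X 2 * q = X 0 * (X 2 * X 4) + X 1 ^ 3 * (X 1 * X 2) := by rw [hq]; ring
        rw [e]
        exact add_mem (Ideal.mul_mem_left _ _ j6) (Ideal.mul_mem_left _ _ j1)
      · have e : X 3 * q = X 0 * (X 3 * X 4) + X 1 ^ 3 * (X 1 * X 3) := by rw [hq]; ring
        rw [e]
        exact add_mem (Ideal.mul_mem_left _ _ j7) (Ideal.mul_mem_left _ _ j3)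
      · have e : (X 4 - X 0) * q
            = X 0 * (X 4 ^ 2 - X 0 * X 4 - X 1 ^ 4) + X 1 ^ 3 * (X 1 * X 4) := by
          rw [hq]; ring
        rw [e]
        exact add_mem (Ideal.mul_mem_left _ _ j9) (Ideal.mul_mem_left _ _ j5)
    · simpa using J.zero_mem
    · intro x y _ _ hx hy
      have e : (x + y) * q = x * q + y * q := by ring
      rw [e]; exact add_mem hx hy
    · intro a x _ hx
      have e : (a • x) * q = a * (x * q) := by rw [smul_eq_mul]; ring
      rw [e]; exact Ideal.mul_mem_left _ _ hx
  -- (q) ⊓ P ≤ J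
  have hqPJ : Ideal.span {q} ⊓ P ≤ J := by
    rintro f ⟨hf1, hf2⟩
    obtain ⟨c, rfl⟩ := Ideal.mem_span_singleton'.1 hf1
    have h0 : aeval σ (c * q) = 0 := hPker _ hf2
    rw [map_mul] at h0
    have hq0 : aeval σ q = X 0 * X 0 := by rw [hq]; simp [hσdef]
    rw [hq0] at h0
    have hX0 : (X 0 * X 0 : MvPolynomial (Fin 5) k) ≠ 0 :=
      mul_ne_zero (X_ne_zero 0) (X_ne_zero 0)
    have hc0 : aeval σ c = 0 := by
      rcases mul_eq_zero.1 h0 with h | h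
      · exact h
      · exact absurd h hX0
    have hcP : c ∈ P := by
      have := hker1 c
      rwa [hc0, sub_zero] at this
    exact key c hcP
  -- conclude
  apply le_antisymm
  · exact le_inf hJP hJQ
  · rw [hQeq, inf_comm, sup_inf_assoc_of_le _ hJP]
    exact sup_le le_rfl hqPJ
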